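/- Let G be a positive-definite symmetric bilinear form on a symplectic vector space (V,ω) of dimension 2d such that G(ξ,ξ)G(η,η) ≥ ω(ξ,η)² for all ξ,η ∈ V. Then the volume of the unit ball of G (equivalently, the Gram determinant of G with respect to any symplectic basis) satisfies det(G) ≥ 1 in any basis where ω is the standard symplectic form; i.e., Vol(G) ≥ Vol(ω). -/

import Mathlib

open Matrix

lemma det_le_one_of_quad {n : Type*} [Fintype n] [DecidableEq n]
    (A : Matrix n n ℝ) (hA : A.PosSemidef)
    (h : ∀ y : n → ℝ, y ⬝ᵥ A *ᵥ y ≤ y ⬝ᵥ y) : A.det ≤ 1 := by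
  have hH := hA.1
  rw [hH.det_eq_prod_eigenvalues]
  apply Finset.prod_le_one
  · intro i _
    exact hA.eigenvalues_nonneg i
  · intro i _
    have hv := hH.eigenvalues_eq i
    set v : n → ℝ := ⇑(hH.eigenvectorBasis i) with hvdef
    have hstar : star v = v := by ext j; simp
    have hnorm : (v ⬝ᵥ v) = 1 := by
      have h1 : (inner ℝ (hH.eigenvectorBasis i) (hH.eigenvectorBasis i) : ℝ) = 1 := by
        rw [real_inner_self_eq_norm_sq, hH.eigenvectorBasis.orthonormal.1 i]
        norm_num
      rw [EuclideanSpace.inner_eq_star_dotProduct] at h1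
      simpa [hstar, dotProduct] using h1
    have : hH.eigenvalues i = v ⬝ᵥ A *ᵥ v := by
      simpa [hstar] using hv
    rw [this]
    calc v ⬝ᵥ A *ᵥ v ≤ v ⬝ᵥ v := h v
      _ = 1 := hnorm

/-- if `G` is a positive-definite symmetric bilinear form on the standard
symplectic space `ℝ^{2d}` (Gram matrix in a symplectic basis, where `ω` has matrix
`Ω = [[0,1],[-1,0]]`) satisfying `G(ξ,ξ)G(η,η) ≥ ω(ξ,η)²` for all `ξ, η`, then
`det G ≥ 1`; i.e. `Vol(G) ≥ Vol(ω)`. -/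
theorem det_ge_one_of_symplectic_lower_bound {d : ℕ}
    (G : Matrix (Fin d ⊕ Fin d) (Fin d ⊕ Fin d) ℝ)
    (hG : G.PosDef)
    (hGω : ∀ ξ η : Fin d ⊕ Fin d → ℝ,
      (ξ ⬝ᵥ (Matrix.fromBlocks 0 1 (-1) 0) *ᵥ η) ^ 2 ≤ (ξ ⬝ᵥ G *ᵥ ξ) * (η ⬝ᵥ G *ᵥ η)) :
    1 ≤ G.det := by
  classical
  set Ω : Matrix (Fin d ⊕ Fin d) (Fin d ⊕ Fin d) ℝ := Matrix.fromBlocks 0 1 (-1) 0 with hΩ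
  have hΩΩ : Ω * Ω = -1 := by
    rw [hΩ, Matrix.fromBlocks_multiply, ← Matrix.fromBlocks_one, Matrix.fromBlocks_neg]
    congr 1 <;> simp
  have hdetΩ : Ω.det * Ω.det = 1 := by
    have h1 := congrArg Matrix.det hΩΩ
    rw [Matrix.det_mul, Matrix.det_neg, Matrix.det_one, mul_one] at h1
    rw [h1, Fintype.card_sum, Fintype.card_fin]
    exact Even.neg_one_pow ⟨d, rfl⟩
  have hGinv : (G⁻¹).PosDef := hG.inv
  obtain ⟨P, hPsd, hPP⟩ : ∃ P : Matrix (Fin d ⊕ Fin d) (Fin d ⊕ Fin d) ℝ,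
      P.PosSemidef ∧ P * P = G⁻¹ := by
    open scoped MatrixOrder in
    exact ⟨CFC.sqrt G⁻¹, (CFC.sqrt_nonneg _).posSemidef,
      CFC.sqrt_mul_sqrt_self _ hGinv.posSemidef.nonneg⟩
  have hPsymm : Pᵀ = P := hPsd.1
  have hGdet : 0 < G.det := hG.det_pos
  have hPdet : P.det ≠ 0 := by
    intro h0
    have : (G⁻¹).det = 0 := by rw [← hPP, Matrix.det_mul, h0, mul_zero]
    rw [Matrix.det_nonsing_inv, Ring.inverse_eq_inv] at this
    exact (inv_ne_zero hGdet.ne') this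
  have hPunit : IsUnit P.det := isUnit_iff_ne_zero.mpr hPdet
  have hPGP : P * G * P = 1 := by
    have hGeq : G = P⁻¹ * P⁻¹ := by
      have h2 : G⁻¹⁻¹ = (P * P)⁻¹ := by rw [hPP]
      rw [Matrix.nonsing_inv_nonsing_inv G (isUnit_iff_ne_zero.mpr hGdet.ne')] at h2
      rw [h2, Matrix.mul_inv_rev]
    rw [hGeq, show P * (P⁻¹ * P⁻¹) * P = (P * P⁻¹) * (P⁻¹ * P) by
      simp only [Matrix.mul_assoc]]
    rw [Matrix.mul_nonsing_inv P hPunit, Matrix.nonsing_inv_mul P hPunit, one_mul]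
  set S := P * Ω * P with hS
  have hkey : ∀ y : Fin d ⊕ Fin d → ℝ, y ⬝ᵥ (Sᵀ * S) *ᵥ y ≤ y ⬝ᵥ y := by
    intro y
    have conj : ∀ (M : Matrix (Fin d ⊕ Fin d) (Fin d ⊕ Fin d) ℝ) (x z : Fin d ⊕ Fin d → ℝ),
        (P *ᵥ x) ⬝ᵥ M *ᵥ (P *ᵥ z) = x ⬝ᵥ (P * M * P) *ᵥ z := by
      intro M x z
      calc (P *ᵥ x) ⬝ᵥ M *ᵥ (P *ᵥ z)
          = (P *ᵥ x) ⬝ᵥ ((M * P) *ᵥ z) := by rw [Matrix.mulVec_mulVec]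
        _ = ((P *ᵥ x) ᵥ* (M * P)) ⬝ᵥ z := Matrix.dotProduct_mulVec _ _ _
        _ = ((x ᵥ* P) ᵥ* (M * P)) ⬝ᵥ z := by
              rw [← Matrix.vecMul_transpose P x, hPsymm]
        _ = (x ᵥ* (P * (M * P))) ⬝ᵥ z := by rw [Matrix.vecMul_vecMul]
        _ = x ⬝ᵥ (P * M * P) *ᵥ z := by
              rw [← Matrix.mul_assoc, ← Matrix.dotProduct_mulVec]
    have hq : ∀ x z : Fin d ⊕ Fin d → ℝ, (x ⬝ᵥ S *ᵥ z) ^ 2 ≤ (x ⬝ᵥ x) * (z ⬝ᵥ z) := by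
      intro x z
      have h3 := hGω (P *ᵥ x) (P *ᵥ z)
      rwa [conj, conj, conj, hPGP, Matrix.one_mulVec, Matrix.one_mulVec] at h3
    have hSy : y ⬝ᵥ (Sᵀ * S) *ᵥ y = (S *ᵥ y) ⬝ᵥ (S *ᵥ y) := by
      calc y ⬝ᵥ (Sᵀ * S) *ᵥ y
          = (y ᵥ* (Sᵀ * S)) ⬝ᵥ y := Matrix.dotProduct_mulVec _ _ _
        _ = ((y ᵥ* Sᵀ) ᵥ* S) ⬝ᵥ y := by rw [Matrix.vecMul_vecMul]
        _ = ((S *ᵥ y) ᵥ* S) ⬝ᵥ y := by rw [Matrix.vecMul_transpose]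
        _ = (S *ᵥ y) ⬝ᵥ (S *ᵥ y) := (Matrix.dotProduct_mulVec _ _ _).symm
    rw [hSy]
    have h1 := hq (S *ᵥ y) y
    have h2 : (0:ℝ) ≤ (S *ᵥ y) ⬝ᵥ (S *ᵥ y) :=
      Finset.sum_nonneg fun i _ => mul_self_nonneg _
    have h3 : (0:ℝ) ≤ y ⬝ᵥ y := Finset.sum_nonneg fun i _ => mul_self_nonneg _
    nlinarith [h1, h2, h3]
  have hSd : (Sᵀ * S).PosSemidef := by
    have h4 := Matrix.posSemidef_conjTranspose_mul_self S
    simpa using h4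
  have hdet := det_le_one_of_quad _ hSd hkey
  rw [Matrix.det_mul, Matrix.det_transpose] at hdet
  have hSdet : S.det = P.det * Ω.det * P.det := by rw [hS, Matrix.det_mul, Matrix.det_mul]
  have hPPdet : P.det * P.det = (G.det)⁻¹ := by
    have h5 := congrArg Matrix.det hPP
    rwa [Matrix.det_mul, Matrix.det_nonsing_inv, Ring.inverse_eq_inv] at h5
  rw [hSdet] at hdet
  have hinv : (G.det)⁻¹ * (G.det)⁻¹ ≤ 1 := by
    have heq : (G.det)⁻¹ * (G.det)⁻¹ =
        (P.det * Ω.det * P.det) * (P.det * Ω.det * P.det) := by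
      rw [← hPPdet]; nlinarith [hdetΩ]
    rw [heq]; exact hdet
  have hpos : 0 < (G.det)⁻¹ := inv_pos.mpr hGdet
  have hle : (G.det)⁻¹ ≤ 1 := by nlinarith
  nlinarith [mul_inv_cancel₀ hGdet.ne', hle, hGdet]
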